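/- Let T be a transducer that does not satisfy the weak twinning property. Then there exists a run q₁ →^{u|u₁} q₁ →^{v|v₁} q₁ →^{u|u₂} q₂ →^{v|v₂} q₂ in T such that for every n ∈ ℕ, |Δ(u₁v₁ⁿ, u₂v₂ⁿ)| ≥ n. -/

import Mathlib

variable {S G : Type}

def wordFG (w : List G) : FreeGroup G := (w.map FreeGroup.of).prod

def delta (v w : List G) : FreeGroup G := (wordFG v)⁻¹ * wordFG w

def dlen [DecidableEq G] (v w : List G) : ℕ := (delta v w).norm

def wpow (v : List G) (n : ℕ) : List G := (List.replicate n v).flatten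

structure NFT (S G Q : Type) where
  E : Set (Q × S × List G × Q)
  I : Set Q
  F : Set Q
  out : Q → List G

namespace NFT

variable {Q Q₁ Q₂ : Type}

inductive Run (T : NFT S G Q) : Q → List S → List G → Q → Prop
  | nil (q : Q) : Run T q [] [] q
  | cons {q q' q'' : Q} {a : S} {w : List G} {u : List S} {v : List G} :
      (q, a, w, q') ∈ T.E → Run T q' u v q'' → Run T q (a :: u) (w ++ v) q''

def Rel (T : NFT S G Q) (u : List S) (v : List G) : Prop :=
  ∃ i t w, i ∈ T.I ∧ t ∈ T.F ∧ T.Run i u w t ∧ v = w ++ T.out t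

def Trim (T : NFT S G Q) : Prop :=
  ∀ q : Q, ∃ i t u₁ w₁ u₂ w₂, i ∈ T.I ∧ t ∈ T.F ∧ T.Run i u₁ w₁ q ∧ T.Run q u₂ w₂ t

def WTP (T : NFT S G Q) : Prop :=
  ∀ q₁ q₂ (u v : List S) (u₁ u₂ v₁ v₂ : List G), T.Run q₁ u u₁ q₁ → T.Run q₁ v v₁ q₁ →
    T.Run q₁ u u₂ q₂ → T.Run q₂ v v₂ q₂ →
    delta u₁ u₂ = delta (u₁ ++ v₁) (u₂ ++ v₂)

def Seq (T : NFT S G Q) : Prop :=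
  (∃ q₀, T.I = {q₀}) ∧
  ∀ q a w₁ q₁ w₂ q₂, (q, a, w₁, q₁) ∈ T.E → (q, a, w₂, q₂) ∈ T.E → w₁ = w₂ ∧ q₁ = q₂

end NFT

set_option linter.unusedSectionVars false
namespace TwinAux
open FreeGroup List

variable {α : Type} [DecidableEq α]

/-- A reduced word: no adjacent cancelling pair. -/
def IsRed (L : List (α × Bool)) : Prop :=
  List.Chain' (fun p q => ¬(p.1 = q.1 ∧ p.2 = !q.2)) L

theorem isRed_reduce (L : List (α × Bool)) : IsRed (reduce L) := by
  induction L with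
  | nil => simp [IsRed, List.Chain']
  | cons x t ih =>
    rw [reduce.cons]
    rcases h : reduce t with _ | ⟨hd, tl⟩
    · simp [IsRed, List.Chain']
    · rw [h] at ih
      by_cases hc : x.1 = hd.1 ∧ x.2 = !hd.2
      · simp only [hc, and_self, if_true]
        exact ih.tail
      · simp only [hc, if_false]
        exact List.IsChain.cons_cons hc ih

theorem reduce_of_isRed : ∀ {L : List (α × Bool)}, IsRed L → reduce L = L := by
  intro L h
  induction L with
  | nil => rfl
  | cons x t ih =>
    have ht : IsRed t := h.tail
    rw [reduce.cons, ih ht]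
    cases t with
    | nil => rfl
    | cons hd tl =>
      have hc : ¬(x.1 = hd.1 ∧ x.2 = !hd.2) := (List.isChain_cons_cons.mp h).1
      simp only [hc, if_false]

theorem isRed_toWord (x : FreeGroup α) : IsRed x.toWord := by
  rw [← reduce_toWord]; exact isRed_reduce _

theorem invRev_append (L₁ L₂ : List (α × Bool)) :
    invRev (L₁ ++ L₂) = invRev L₂ ++ invRev L₁ := by
  simp [invRev]

theorem isRed_invRev {L : List (α × Bool)} (h : IsRed L) : IsRed (invRev L) := by
  unfold IsRed invRev List.Chain'
  rw [List.isChain_reverse, List.isChain_map]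
  refine h.imp ?_
  rintro ⟨a, b⟩ ⟨c, d⟩ h ⟨h1, h2⟩
  dsimp at h1 h2
  exact h ⟨h1.symm, by revert h2; cases b <;> cases d <;> simp⟩

/-- Longest common prefix length. -/
def lcp : List (α × Bool) → List (α × Bool) → ℕ
  | a :: as, b :: bs => if a = b then lcp as bs + 1 else 0
  | _, _ => 0

theorem lcp_le_left : ∀ (x y : List (α × Bool)), lcp x y ≤ x.length
  | [], _ => by simp [lcp]
  | a :: as, [] => by simp [lcp]
  | a :: as, b :: bs => by
    rw [lcp]
    split
    · simpa using lcp_le_left as bs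
    · simp

theorem lcp_le_right : ∀ (x y : List (α × Bool)), lcp x y ≤ y.length
  | [], _ => by simp [lcp]
  | a :: as, [] => by simp [lcp]
  | a :: as, b :: bs => by
    rw [lcp]
    split
    · simpa using lcp_le_right as bs
    · simp

theorem take_lcp : ∀ (x y : List (α × Bool)), x.take (lcp x y) = y.take (lcp x y)
  | [], y => by simp [lcp]
  | a :: as, [] => by simp [lcp]
  | a :: as, b :: bs => by
    rw [lcp]
    split
    · next h => simp [List.take_succ_cons, h, take_lcp as bs]
    · simp

theorem le_lcp : ∀ (x y : List (α × Bool)) (c : ℕ), c ≤ x.length →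
    x.take c = y.take c → c ≤ lcp x y := by
  intro x
  induction x with
  | nil =>
    intro y c h _
    simp only [List.length_nil, Nat.le_zero] at h
    simp [h]
  | cons a as ih =>
    intro y c hc ht
    cases c with
    | zero => simp
    | succ c =>
      cases y with
      | nil => simp at ht
      | cons b bs =>
        simp only [List.take_succ_cons, List.cons.injEq] at ht
        rw [lcp, if_pos ht.1]
        have := ih bs c (by simpa using hc) ht.2
        omega

theorem lcp_getElem_ne : ∀ (x y : List (α × Bool)) (hx : lcp x y < x.length)
    (hy : lcp x y < y.length), x[lcp x y] ≠ y[lcp x y]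
  | [], y => by simp [lcp]
  | a :: as, [] => by simp
  | a :: as, b :: bs => by
    by_cases h : a = b
    · rw [lcp, if_pos h]
      intro hx hy
      simpa using lcp_getElem_ne as bs (by simpa using hx) (by simpa using hy)
    · rw [lcp, if_neg h]
      intro _ _
      simpa using h

theorem lcp_prefix_mono {x x' y y' : List (α × Bool)} (hx : x <+: x') (hy : y <+: y') :
    lcp x y ≤ lcp x' y' := by
  apply le_lcp
  · exact le_trans (lcp_le_left x y) hx.length_le
  · obtain ⟨tx, rfl⟩ := hx
    obtain ⟨ty, rfl⟩ := hy
    rw [List.take_append_of_le_length (lcp_le_left x y),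
      List.take_append_of_le_length (lcp_le_right x y)]
    exact take_lcp x y

theorem lcp_eq_min_of_prefix {x y z : List (α × Bool)} (hx : x <+: z) (hy : y <+: z) :
    lcp x y = min x.length y.length := by
  refine le_antisymm (le_min (lcp_le_left x y) (lcp_le_right x y)) ?_
  apply le_lcp
  · exact min_le_left _ _
  · obtain ⟨tx, rfl⟩ := hx
    obtain ⟨ty, hz⟩ := hy
    have h1 : (x ++ tx).take (min x.length y.length) = (y ++ ty).take (min x.length y.length) := by
      rw [hz]
    rw [List.take_append_of_le_length (min_le_left _ _),
      List.take_append_of_le_length (min_le_right _ _)] at h1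
    exact h1


theorem mk_invRev (L : List (α × Bool)) : mk (invRev L) = (mk L)⁻¹ :=
  (inv_mk).symm

/-- The master cancellation theorem: the reduced word of a product. -/
theorem toWord_mul (x y : FreeGroup α) :
    (x * y).toWord = invRev ((x⁻¹.toWord).drop (lcp x⁻¹.toWord y.toWord))
      ++ y.toWord.drop (lcp x⁻¹.toWord y.toWord) := by
  set Z := x⁻¹.toWord with hZ
  set Y := y.toWord with hY
  set c := lcp Z Y with hc
  have hcZ : c ≤ Z.length := lcp_le_left _ _
  have hcY : c ≤ Y.length := lcp_le_right _ _
  -- group-level identity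
  have hxy : x * y = mk (invRev (Z.drop c) ++ Y.drop c) := by
    have h1 : x = mk (invRev Z) := by
      rw [mk_invRev, hZ, mk_toWord, inv_inv]
    have h2 : y = mk Y := by rw [hY, mk_toWord]
    rw [h1, h2, mul_mk]
    have hZsplit : Z = Z.take c ++ Z.drop c := (List.take_append_drop _ _).symm
    have hYsplit : Y = Y.take c ++ Y.drop c := (List.take_append_drop _ _).symm
    calc mk (invRev Z ++ Y)
        = mk (invRev Z) * mk Y := (mul_mk).symm
      _ = mk (invRev (Z.take c ++ Z.drop c)) * mk (Y.take c ++ Y.drop c) := by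
          rw [← hZsplit, ← hYsplit]
      _ = (mk (invRev (Z.drop c)) * mk (invRev (Z.take c))) *
            (mk (Y.take c) * mk (Y.drop c)) := by
          rw [invRev_append, ← mul_mk, ← mul_mk]
      _ = mk (invRev (Z.drop c)) * ((mk (Z.take c))⁻¹ * mk (Y.take c)) * mk (Y.drop c) := by
          simp only [mk_invRev]; group
      _ = mk (invRev (Z.drop c)) * mk (Y.drop c) := by
          rw [take_lcp Z Y, ← hc]; group
      _ = mk (invRev (Z.drop c) ++ Y.drop c) := mul_mk
  rw [hxy, toWord_mk]
  apply reduce_of_isRed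
  -- the concatenation is reduced
  have hZr : IsRed Z := isRed_toWord _
  have hYr : IsRed Y := isRed_toWord _
  have hZ' : IsRed (invRev (Z.drop c)) := isRed_invRev (hZr.suffix (List.drop_suffix _ _))
  have hY' : IsRed (Y.drop c) := hYr.suffix (List.drop_suffix _ _)
  refine List.isChain_append.mpr ⟨hZ', hY', ?_⟩
  intro p hp q hq
  -- p is the last of invRev (Z.drop c), q the head of Y.drop c
  rw [List.head?_drop] at hq
  have hq' : c < Y.length := by
    by_contra hcon
    rw [List.getElem?_eq_none (by omega)] at hq
    simp at hq
  have hqe : Y[c] = q := by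
    rw [List.getElem?_eq_getElem hq'] at hq
    exact Option.some_injective _ hq
  -- last of invRev L is the inverted head of L
  have hp' : ∃ z, (Z.drop c).head? = some z ∧ p = (z.1, !z.2) := by
    unfold invRev at hp
    rw [List.getLast?_reverse] at hp
    cases hzd : (Z.drop c).head? with
    | none =>
      rw [List.head?_map, hzd] at hp
      simp at hp
    | some z =>
      rw [List.head?_map, hzd] at hp
      refine ⟨z, rfl, ?_⟩
      simpa using hp.symm
  obtain ⟨z, hz1, rfl⟩ := hp'
  rw [List.head?_drop] at hz1
  have hz' : c < Z.length := by
    by_contra hcon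
    rw [List.getElem?_eq_none (by omega)] at hz1
    simp at hz1
  have hze : Z[c] = z := by
    rw [List.getElem?_eq_getElem hz'] at hz1
    exact Option.some_injective _ hz1
  have hne := lcp_getElem_ne Z Y hz' hq'
  rw [hze, hqe] at hne
  rintro ⟨h1, h2⟩
  dsimp at h1 h2
  apply hne
  ext
  · exact h1
  · revert h2; cases z.2 <;> cases q.2 <;> simp

theorem norm_toWord (x : FreeGroup α) : x.norm = x.toWord.length := rfl

theorem norm_mul_eq (x y : FreeGroup α) :
    (x * y).norm = (x.norm - lcp x⁻¹.toWord y.toWord) + (y.norm - lcp x⁻¹.toWord y.toWord) := by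
  rw [norm_toWord, toWord_mul, List.length_append, invRev_length, List.length_drop,
    List.length_drop, ← norm_toWord, ← norm_toWord, norm_inv_eq]


/-- Cyclically reduced (as an element): the doubled word is reduced. -/
def CP (s : FreeGroup α) : Prop := IsRed (s.toWord ++ s.toWord)

theorem CP_one : CP (1 : FreeGroup α) := by
  unfold CP
  rw [toWord_one]
  simp [IsRed, List.Chain']

theorem isRed_flatten_replicate {W : List (α × Bool)} (h : IsRed (W ++ W)) (n : ℕ) :
    IsRed ((List.replicate n W).flatten) := by
  obtain ⟨hW, -, hj⟩ := List.isChain_append.mp h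
  induction n with
  | zero => simp [IsRed, List.Chain']
  | succ n ih =>
    rw [List.replicate_succ, List.flatten_cons]
    refine List.isChain_append.mpr ⟨hW, ih, ?_⟩
    intro p hp q hq
    apply hj p hp
    cases n with
    | zero => simp at hq
    | succ m =>
      rw [List.replicate_succ, List.flatten_cons] at hq
      rcases W with _ | ⟨w, ws⟩
      · simp at hq
      · rw [List.head?_append_of_ne_nil _ (by simp)] at hq
        exact hq

theorem toWord_pow {s : FreeGroup α} (h : CP s) (n : ℕ) :
    (s ^ n).toWord = (List.replicate n s.toWord).flatten := by
  have h1 : s ^ n = mk ((List.replicate n s.toWord).flatten) := by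
    conv_lhs => rw [← mk_toWord (x := s)]
    rw [pow_mk]
  rw [h1, toWord_mk, reduce_of_isRed (isRed_flatten_replicate h n)]

theorem norm_pow {s : FreeGroup α} (h : CP s) (n : ℕ) :
    (s ^ n).norm = n * s.norm := by
  rw [norm_toWord, toWord_pow h, List.length_flatten, List.map_replicate,
    List.sum_replicate, smul_eq_mul, norm_toWord]

/-- Every element is conjugate to a cyclically reduced element. -/
theorem exists_cyc (x : FreeGroup α) : ∃ g s, x = g * s * g⁻¹ ∧ CP s := by
  suffices H : ∀ (N : ℕ) (x : FreeGroup α), x.norm ≤ N → ∃ g s, x = g * s * g⁻¹ ∧ CP s from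
    H x.norm x le_rfl
  intro N
  induction N with
  | zero =>
    intro x hx
    have : x = 1 := norm_eq_zero.mp (Nat.le_zero.mp hx)
    exact ⟨1, 1, by simp [this], CP_one⟩
  | succ N ih =>
    intro x hx
    rcases hW : x.toWord with _ | ⟨p, t⟩
    · have : x = 1 := toWord_eq_nil_iff.mp hW
      exact ⟨1, 1, by simp [this], CP_one⟩
    rcases ht : t with _ | ⟨p₂, t₂⟩
    · -- single letter
      refine ⟨1, x, by simp, ?_⟩
      unfold CP
      rw [hW, ht]
      refine List.isChain_cons_cons.mpr ⟨?_, List.isChain_singleton _⟩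
      rintro ⟨-, h2⟩
      simp at h2
    · obtain ⟨m, q, hmq⟩ := t.eq_nil_or_concat.resolve_left (by rw [ht]; simp)
      rw [hmq, List.concat_eq_append] at hW
      by_cases hq : q = (p.1, !p.2)
      · -- strip conjugation
        have hxred : IsRed (p :: (m ++ [q])) := by rw [← hW]; exact isRed_toWord x
        have hmred : IsRed m := hxred.infix ⟨[p], [q], by simp⟩
        have hxmk : x = mk [p] * mk m * (mk [p])⁻¹ := by
          have h0 : x = mk (p :: (m ++ [q])) := by rw [← hW, mk_toWord]
          have h1 : (mk [p] : FreeGroup α)⁻¹ = mk [q] := by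
            rw [← mk_invRev]
            congr 1
            simp [invRev, hq]
          rw [h0, h1, mul_mk, mul_mk]
          all_goals simp
        have hnm : (mk m).norm ≤ N := by
          have h1 : (mk m).norm = m.length := by
            rw [norm_toWord, toWord_mk, reduce_of_isRed hmred]
          have h2 : x.norm = (p :: (m ++ [q])).length := by rw [norm_toWord, hW]
          simp only [List.length_cons, List.length_append, List.length_cons] at h2
          omega
        obtain ⟨g, s, hgs, hcp⟩ := ih (mk m) hnm
        refine ⟨mk [p] * g, s, ?_, hcp⟩
        rw [hxmk, hgs]
        group
      · -- already cyclically reduced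
        refine ⟨1, x, by simp, ?_⟩
        unfold CP
        have hxred : IsRed x.toWord := isRed_toWord x
        refine List.isChain_append.mpr ⟨hxred, hxred, ?_⟩
        intro z hz w hw
        rw [hW] at hz hw
        have hz' : z = q := by
          have : (p :: (m ++ [q])).getLast? = some q := by
            rw [← List.head?_reverse]; simp
          rw [this] at hz
          exact (Option.some_injective _ hz).symm
        have hw' : w = p := by
          simp only [List.head?_cons] at hw
          exact (Option.some_injective _ hw).symm
        subst hz' hw'
        rintro ⟨h1, h2⟩
        exact hq (Prod.ext_iff.mpr ⟨h1, h2⟩)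

theorem mono_stab {f : ℕ → ℕ} (hm : Monotone f) :
    ∀ K : ℕ, (∀ n, f n ≤ K) → ∃ N, ∀ n, N ≤ n → f n = f N := by
  intro K
  induction K with
  | zero =>
    intro hb
    exact ⟨0, fun n _ => by have h1 := hb n; have h2 := hb 0; omega⟩
  | succ K ih =>
    intro hb
    by_cases h : ∀ n, f n ≤ K
    · exact ih h
    · push_neg at h
      obtain ⟨m, hK⟩ := h
      refine ⟨m, fun n hn => ?_⟩
      have h1 := hm hn
      have h2 := hb n
      omega

def frep (n : ℕ) (W : List (α × Bool)) : List (α × Bool) := (List.replicate n W).flatten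

theorem frep_add (m n : ℕ) (W : List (α × Bool)) :
    frep (m + n) W = frep m W ++ frep n W := by
  unfold frep
  rw [List.replicate_add, List.flatten_append]

theorem frep_succ_front (n : ℕ) (W : List (α × Bool)) :
    frep (n + 1) W = W ++ frep n W := by
  have : n + 1 = 1 + n := by omega
  rw [this, frep_add]
  unfold frep
  simp

theorem length_frep (n : ℕ) (W : List (α × Bool)) : (frep n W).length = n * W.length := by
  unfold frep
  rw [List.length_flatten, List.map_replicate, List.sum_replicate, smul_eq_mul]

theorem frep_prefix (W : List (α × Bool)) {m n : ℕ} (h : m ≤ n) : frep m W <+: frep n W := by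
  refine ⟨frep (n - m) W, ?_⟩
  rw [← frep_add]
  congr 1
  omega

theorem delta_step {a b d : FreeGroup α} {n : ℕ}
    (h : (a ^ n)⁻¹ * d * b ^ n = (a ^ (n + 1))⁻¹ * d * b ^ (n + 1)) : a * d = d * b := by
  calc a * d = a ^ (n+1) * ((a ^ n)⁻¹ * d * b ^ n) * (b ^ n)⁻¹ := by
        rw [pow_succ']; simp [mul_assoc]
    _ = a ^ (n+1) * ((a ^ (n+1))⁻¹ * d * b ^ (n+1)) * (b ^ n)⁻¹ := by rw [h]
    _ = d * b := by rw [pow_succ' b]; simp [mul_assoc]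

/-- The key growth lemma: for cyclically reduced `a`, `b`, if `a*d ≠ d*b` then the delay
`(aⁿ)⁻¹ d bⁿ` grows at least like `n`, up to an additive constant. -/
theorem key {a b d : FreeGroup α} (ha : CP a) (hb : CP b) (hne : a * d ≠ d * b) :
    ∃ C : ℕ, ∀ n : ℕ, n ≤ ((a ^ n)⁻¹ * d * b ^ n).norm + C := by
  classical
  set A := a.toWord with hA
  set B := b.toWord with hB
  set la := A.length with hla
  set lb := B.length with hlb
  by_cases h0 : la = 0 ∧ lb = 0
  · exfalso
    have ha1 : a = 1 := toWord_eq_nil_iff.mp (List.length_eq_zero_iff.mp h0.1)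
    have hb1 : b = 1 := toWord_eq_nil_iff.mp (List.length_eq_zero_iff.mp h0.2)
    rw [ha1, hb1, one_mul, mul_one] at hne
    exact hne rfl
  have hlab : 1 ≤ la + lb := by omega
  set Zd := (d⁻¹).toWord with hZd
  have hAn : ∀ n, (a ^ n).toWord = frep n A := toWord_pow ha
  have hBn : ∀ n, (b ^ n).toWord = frep n B := toWord_pow hb
  -- the cancellation between d and bⁿ stabilizes
  have hcmono : Monotone (fun n => lcp Zd (frep n B)) := fun m n hmn =>
    lcp_prefix_mono (List.prefix_refl _) (frep_prefix B hmn)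
  obtain ⟨n₀, hn₀⟩ := mono_stab hcmono Zd.length (fun n => lcp_le_left _ _)
  set γ := lcp Zd (frep n₀ B) with hγ
  set D₁ := invRev (Zd.drop γ) with hD₁
  have hγZd : γ ≤ Zd.length := lcp_le_left _ _
  have hγB : ∀ n, n₀ ≤ n → γ ≤ n * lb := by
    intro n hn
    have h1 := lcp_le_right Zd (frep n B)
    rw [length_frep] at h1
    rw [← hn₀ n hn] at *
    exact h1
  -- the reduced word of d * bⁿ
  have hY : ∀ n, n₀ ≤ n → (d * b ^ n).toWord = D₁ ++ (frep n B).drop γ := by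
    intro n hn
    have hm := toWord_mul d (b ^ n)
    rw [hBn n] at hm
    rw [hm, hn₀ n hn]
  have hYlen : ∀ n, n₀ ≤ n → (d * b ^ n).toWord.length = D₁.length + (n * lb - γ) := by
    intro n hn
    rw [hY n hn, List.length_append, List.length_drop, length_frep, ← hlb]
  -- the reduced word of δₙ = (aⁿ)⁻¹ (d bⁿ)
  set p : ℕ → ℕ := fun n => lcp (frep n A) ((d * b ^ n).toWord) with hp
  have hδ : ∀ n, ((a ^ n)⁻¹ * (d * b ^ n)).toWord
      = invRev ((frep n A).drop (p n)) ++ ((d * b ^ n).toWord).drop (p n) := by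
    intro n
    have hm := toWord_mul ((a ^ n)⁻¹) (d * b ^ n)
    rw [inv_inv, hAn n] at hm
    exact hm
  have hδlen : ∀ n, ((a ^ n)⁻¹ * (d * b ^ n)).norm
      = (n * la - p n) + ((d * b ^ n).toWord.length - p n) := by
    intro n
    rw [norm_toWord, hδ n, List.length_append, invRev_length, List.length_drop,
      List.length_drop, length_frep, ← hla]
  have hpla : ∀ n, p n ≤ n * la := by
    intro n
    have := lcp_le_left (frep n A) ((d * b ^ n).toWord)
    rwa [length_frep, ← hla] at this
  have hpY : ∀ n, p n ≤ (d * b ^ n).toWord.length := fun n => lcp_le_right _ _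
  have hassoc : ∀ n : ℕ, (a ^ n)⁻¹ * d * b ^ n = (a ^ n)⁻¹ * (d * b ^ n) := fun n =>
    mul_assoc _ _ _
  by_cases hPb : ∃ P, ∀ n, p n ≤ P
  · -- bounded common prefix: growth with slope la + lb ≥ 1
    obtain ⟨P, hP⟩ := hPb
    refine ⟨2 * P + Zd.length + n₀, ?_⟩
    intro n
    rcases lt_or_ge n n₀ with hn | hn
    · omega
    · have h1 := hδlen n
      have h2 := hYlen n hn
      have h3 := hpla n
      have h4 := hpY n
      have h5 := hP n
      have h6 := hγB n hn
      have h7 : n ≤ n * la + n * lb := by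
        have := Nat.mul_le_mul_left n hlab
        simp [Nat.mul_add] at this
        omega
      rw [hassoc n]
      omega
  · -- unbounded common prefix
    push_neg at hPb
    have hpdef : ∀ n, p n = lcp (frep n A) ((d * b ^ n).toWord) := fun _ => rfl
    have hla1 : 1 ≤ la := by
      by_contra hcon
      obtain ⟨n, hn⟩ := hPb 0
      have h2 := hpla n
      have h1 : la = 0 := by omega
      rw [h1, Nat.mul_zero] at h2
      omega
    have hlb1 : 1 ≤ lb := by
      by_contra hcon
      have h1 : lb = 0 := by omega
      obtain ⟨n, hn⟩ := hPb d.norm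
      have h2 := hpY n
      have h3 : (d * b ^ n).toWord.length ≤ d.norm + n * lb := by
        have h4 := norm_mul_le d (b ^ n)
        rw [norm_pow hb] at h4
        exact h4
      rw [h1, Nat.mul_zero] at h3
      omega
    have hD₁len : D₁.length = Zd.length - γ := by
      rw [hD₁, invRev_length, List.length_drop]
    have hYpre : ∀ m n, n₀ ≤ m → m ≤ n →
        (d * b ^ m).toWord <+: (d * b ^ n).toWord := by
      intro m n hm hmn
      rw [hY m hm, hY n (le_trans hm hmn)]
      have hsplit : frep n B = frep m B ++ frep (n - m) B := by
        rw [← frep_add]; congr 1; omega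
      have hγm : γ ≤ (frep m B).length := by
        rw [length_frep, ← hlb]; exact hγB m hm
      rw [hsplit, List.drop_append_of_le_length hγm]
      exact ⟨frep (n - m) B, by rw [List.append_assoc]⟩
    have hmin : ∀ n, n₀ ≤ n → p n = min (n * la) ((d * b ^ n).toWord.length) := by
      intro n hn
      obtain ⟨m, hmbig⟩ := hPb (n * la + (d * b ^ n).toWord.length + n₀ * la)
      have h1 := hpla m
      have hnm : n ≤ m := by
        by_contra hcon
        have : m * la ≤ n * la := Nat.mul_le_mul_right la (by omega)
        omega
      have hn0m : n₀ ≤ m := by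
        by_contra hcon
        have : m * la ≤ n₀ * la := Nat.mul_le_mul_right la (by omega)
        omega
      have hAm : frep n A <+: frep m A := frep_prefix A hnm
      have hYm : (d * b ^ n).toWord <+: (d * b ^ m).toWord := hYpre n m hn hnm
      have hlenA : (frep n A).length = n * la := by rw [length_frep, ← hla]
      have hnlapm : n * la ≤ p m := by omega
      have hAYm : frep n A <+: (d * b ^ m).toWord := by
        rw [List.prefix_iff_eq_take, hlenA]
        have e1 : frep n A = (frep m A).take (n * la) := by
          rw [List.prefix_iff_eq_take] at hAm
          rw [← hlenA]; exact hAm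
        have e2 : (frep m A).take (n * la) = ((frep m A).take (p m)).take (n * la) := by
          rw [List.take_take, min_eq_left hnlapm]
        have e3 : ((frep m A).take (p m)).take (n * la)
            = (((d * b ^ m).toWord).take (p m)).take (n * la) := by
          rw [hpdef m, take_lcp]
        have e4 : (((d * b ^ m).toWord).take (p m)).take (n * la)
            = ((d * b ^ m).toWord).take (n * la) := by
          rw [List.take_take, min_eq_left hnlapm]
        rw [e1, e2, e3, e4]
      have := lcp_eq_min_of_prefix hAYm hYm
      rw [hpdef n, this, hlenA]
    by_cases hll : la = lb
    · -- equal translation lengths: the delays are eventually constant, contradiction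
      exfalso
      obtain ⟨N, hN⟩ : ∃ N : ℕ, N = n₀ + Zd.length + γ + D₁.length + 1 := ⟨_, rfl⟩
      have wordeqa : γ ≤ D₁.length → ∀ m, n₀ ≤ m → Zd.length + γ + 1 ≤ m * la →
          ((a ^ m)⁻¹ * (d * b ^ m)).toWord
            = (frep m B).drop (γ + (m * la - D₁.length)) := by
        intro hcase m hm hbig
        have hYLm := hYlen m hm
        have hmla : m * la = m * lb := by rw [hll]
        have hγm := hγB m hm
        have hpm : p m = m * la := by
          rw [hmin m hm, min_eq_left (by omega)]
        rw [hδ m, hpm, hY m hm]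
        have hfl : (frep m A).length = m * la := by rw [length_frep, ← hla]
        have h1 : (frep m A).drop (m * la) = [] := by
          rw [← hfl, List.drop_length]
        rw [h1, invRev_empty, List.nil_append, List.drop_append]
        have h2 : D₁.drop (m * la) = [] := List.drop_eq_nil_of_le (by omega)
        rw [h2, List.nil_append, List.drop_drop]
      have wordeqb : D₁.length < γ → ∀ m, n₀ ≤ m → Zd.length + γ + 1 ≤ m * la →
          ((a ^ m)⁻¹ * (d * b ^ m)).toWord
            = invRev ((frep m A).drop (D₁.length + (m * la - γ))) := by
        intro hcase m hm hbig
        have hYLm := hYlen m hm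
        have hmla : m * la = m * lb := by rw [hll]
        have hγm := hγB m hm
        have hpm : p m = D₁.length + (m * lb - γ) := by
          rw [hmin m hm, hYLm, min_eq_right (by omega)]
        rw [hδ m, hpm]
        have h2 : ((d * b ^ m).toWord).drop (D₁.length + (m * lb - γ)) = [] := by
          apply List.drop_eq_nil_of_le
          rw [hYlen m hm]
        rw [h2, List.append_nil]
        congr 2
        omega
      have hbig1 : Zd.length + γ + 1 ≤ N * la := by
        have h := Nat.le_mul_of_pos_right N (show 0 < la by omega)
        omega
      have hbig2 : Zd.length + γ + 1 ≤ (N + 1) * la := by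
        have h := Nat.le_mul_of_pos_right (N + 1) (show 0 < la by omega)
        omega
      have hsucc : (N + 1) * la = N * la + la := by ring
      have hNn0a : n₀ ≤ N := by omega
      have hNn0b : n₀ ≤ N + 1 := by omega
      have heq : ((a ^ N)⁻¹ * (d * b ^ N)).toWord
          = ((a ^ (N + 1))⁻¹ * (d * b ^ (N + 1))).toWord := by
        rcases le_or_gt γ D₁.length with hcase | hcase
        · rw [wordeqa hcase N hNn0a hbig1, wordeqa hcase (N + 1) hNn0b hbig2]
          have harith : γ + ((N + 1) * la - D₁.length)
              = B.length + (γ + (N * la - D₁.length)) := by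
            have h3 : B.length = la := by rw [← hlb, ← hll]
            omega
          rw [harith, frep_succ_front, List.drop_length_add_append]
        · rw [wordeqb hcase N hNn0a hbig1, wordeqb hcase (N + 1) hNn0b hbig2]
          have harith : D₁.length + ((N + 1) * la - γ)
              = A.length + (D₁.length + (N * la - γ)) := by
            have h3 : A.length = la := by rw [← hla]
            omega
          rw [harith, frep_succ_front, List.drop_length_add_append]
      have heq2 : (a ^ N)⁻¹ * d * b ^ N = (a ^ (N + 1))⁻¹ * d * b ^ (N + 1) := by
        rw [hassoc N, hassoc (N + 1)]
        exact toWord_injective heq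
      exact hne (delta_step heq2)
    · -- different translation lengths: growth with slope |la - lb| ≥ 1
      refine ⟨n₀ + Zd.length + D₁.length + γ, ?_⟩
      intro n
      rcases lt_or_ge n n₀ with hn | hn
      · omega
      · have h1 := hδlen n
        have h2 := hYlen n hn
        have h3 := hpla n
        have h4 := hpY n
        have h6 := hγB n hn
        have h5 := hmin n hn
        rw [hassoc n]
        rcases Nat.lt_or_ge la lb with hcase | hcase
        · have hmul : n * la + n ≤ n * lb := by
            calc n * la + n = n * (la + 1) := by ring
              _ ≤ n * lb := Nat.mul_le_mul_left n (by omega)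
          rcases le_total (n * la) ((d * b ^ n).toWord.length) with hmm | hmm
          · rw [min_eq_left hmm] at h5
            omega
          · rw [min_eq_right hmm] at h5
            omega
        · have hne' : lb < la := by omega
          have hmul : n * lb + n ≤ n * la := by
            calc n * lb + n = n * (lb + 1) := by ring
              _ ≤ n * la := Nat.mul_le_mul_left n (by omega)
          rcases le_total (n * la) ((d * b ^ n).toWord.length) with hmm | hmm
          · rw [min_eq_left hmm] at h5
            omega
          · rw [min_eq_right hmm] at h5
            omega
end TwinAux

section Plumbing

variable {S G : Type}

theorem wordFG_append (l₁ l₂ : List G) : wordFG (l₁ ++ l₂) = wordFG l₁ * wordFG l₂ := by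
  simp [wordFG]

theorem wpow_succ_front (v : List G) (n : ℕ) : wpow v (n + 1) = v ++ wpow v n := by
  simp [wpow, List.replicate_succ]

theorem wordFG_wpow (v : List G) (n : ℕ) : wordFG (wpow v n) = (wordFG v) ^ n := by
  induction n with
  | zero => simp [wpow, wordFG]
  | succ n ih =>
    rw [pow_succ', ← ih, wpow_succ_front, wordFG_append]

namespace NFT

variable {Q : Type}

theorem Run.append {T : NFT S G Q} {q q' q'' : Q} {u u' : List S} {w w' : List G}
    (h1 : T.Run q u w q') (h2 : T.Run q' u' w' q'') :
    T.Run q (u ++ u') (w ++ w') q'' := by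
  induction h1 with
  | nil _ => simpa using h2
  | cons he hr ih =>
    rw [List.cons_append, List.append_assoc]
    exact Run.cons he (ih h2)

theorem Run.wpow_loop {T : NFT S G Q} {q : Q} {v : List S} {w : List G}
    (h : T.Run q v w q) (n : ℕ) : T.Run q (wpow v n) (wpow w n) q := by
  induction n with
  | zero => simpa [wpow] using Run.nil (T := T) q
  | succ n ih =>
    rw [wpow_succ_front, wpow_succ_front]
    exact h.append ih

end NFT

end Plumbing

/-- If `T` does not satisfy the weak twinning property, then there is a run
`q₁ →u|u₁ q₁ →v|v₁ q₁ →u|u₂ q₂ →v|v₂ q₂` such that for all `n`, `|Δ(u₁v₁ⁿ,u₂v₂ⁿ)| ≥ n`. -/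
theorem exists_diverging_delay_of_not_wtp [DecidableEq G] {Q : Type}
    (T : NFT S G Q) (h : ¬ T.WTP) :
    ∃ (q₁ q₂ : Q) (u v : List S) (u₁ u₂ v₁ v₂ : List G),
      T.Run q₁ u u₁ q₁ ∧ T.Run q₁ v v₁ q₁ ∧ T.Run q₁ u u₂ q₂ ∧ T.Run q₂ v v₂ q₂ ∧
      ∀ n : ℕ, n ≤ dlen (u₁ ++ wpow v₁ n) (u₂ ++ wpow v₂ n) := by
  classical
  unfold NFT.WTP at h
  push_neg at h
  obtain ⟨q₁, q₂, u, v, u₁, u₂, v₁, v₂, r1, r2, r3, r4, hne⟩ := h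
  set x := wordFG u₁ with hx
  set y := wordFG u₂ with hy
  set a := wordFG v₁ with ha
  set b := wordFG v₂ with hb
  have hne2 : a * (x⁻¹ * y) ≠ (x⁻¹ * y) * b := by
    intro hEq
    apply hne
    unfold delta
    rw [wordFG_append, wordFG_append]
    have h3 : x⁻¹ * y = a⁻¹ * (x⁻¹ * y) * b := by
      have h4 := congrArg (fun z => a⁻¹ * z) hEq
      simpa [mul_assoc] using h4
    calc x⁻¹ * y = a⁻¹ * (x⁻¹ * y) * b := h3
      _ = (x * a)⁻¹ * (y * b) := by group
  obtain ⟨g, sa, hga, hcpa⟩ := TwinAux.exists_cyc a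
  obtain ⟨k, sb, hgb, hcpb⟩ := TwinAux.exists_cyc b
  set d' := g⁻¹ * (x⁻¹ * y) * k with hd'
  have hd : x⁻¹ * y = g * d' * k⁻¹ := by rw [hd']; group
  have hne3 : sa * d' ≠ d' * sb := by
    intro hEq
    apply hne2
    have e1 : a * (x⁻¹ * y) = g * (sa * d') * k⁻¹ := by rw [hga, hd]; group
    have e2 : (x⁻¹ * y) * b = g * (d' * sb) * k⁻¹ := by rw [hgb, hd]; group
    rw [e1, e2, hEq]
  obtain ⟨C, hC⟩ := TwinAux.key hcpa hcpb hne3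
  set j := C + g.norm + k.norm with hj
  refine ⟨q₁, q₂, u ++ wpow v j, v, u₁ ++ wpow v₁ j, u₂ ++ wpow v₂ j, v₁, v₂,
    r1.append (r2.wpow_loop j), r2, r3.append (r4.wpow_loop j), r4, ?_⟩
  intro n
  have hdelta : delta ((u₁ ++ wpow v₁ j) ++ wpow v₁ n) ((u₂ ++ wpow v₂ j) ++ wpow v₂ n)
      = (x * a ^ (j + n))⁻¹ * (y * b ^ (j + n)) := by
    unfold delta
    rw [wordFG_append, wordFG_append, wordFG_append, wordFG_append,
      wordFG_wpow, wordFG_wpow, wordFG_wpow, wordFG_wpow]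
    rw [mul_assoc x, mul_assoc y, ← pow_add, ← pow_add]
  have hδ : (x * a ^ (j + n))⁻¹ * (y * b ^ (j + n))
      = g * ((sa ^ (j + n))⁻¹ * d' * sb ^ (j + n)) * k⁻¹ := by
    have hpa : a ^ (j + n) = g * sa ^ (j + n) * g⁻¹ := by rw [hga, conj_pow]
    have hpb : b ^ (j + n) = k * sb ^ (j + n) * k⁻¹ := by rw [hgb, conj_pow]
    have hxy : y = x * (g * d' * k⁻¹) := by
      rw [← hd]; group
    rw [hpa, hpb, hxy]
    group
  set DL := delta ((u₁ ++ wpow v₁ j) ++ wpow v₁ n) ((u₂ ++ wpow v₂ j) ++ wpow v₂ n) with hDL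
  have hinner : (sa ^ (j + n))⁻¹ * d' * sb ^ (j + n) = g⁻¹ * DL * k := by
    rw [hdelta, hδ]; group
  have hnormle : ((sa ^ (j + n))⁻¹ * d' * sb ^ (j + n)).norm
      ≤ g.norm + DL.norm + k.norm := by
    rw [hinner]
    have t1 := FreeGroup.norm_mul_le (g⁻¹ * DL) k
    have t2 := FreeGroup.norm_mul_le g⁻¹ DL
    have t3 : (g⁻¹ : FreeGroup G).norm = g.norm := FreeGroup.norm_inv_eq
    omega
  have hdl : dlen ((u₁ ++ wpow v₁ j) ++ wpow v₁ n) ((u₂ ++ wpow v₂ j) ++ wpow v₂ n)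
      = DL.norm := rfl
  rw [hdl]
  have hCn := hC (j + n)
  omega
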